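/- For every natural number n and every element q of a commutative ring R, the generating function of the inversion number over the symmetric group factorizes: ∑_{σ ∈ S_n} q^{inv(σ)} = ∏_{i=1}^{n} (1 + q + q² + ⋯ + q^{i−1}). -/

import Mathlib

open Equiv Finset

/-- The inversion number of a permutation of `{0,…,n−1}`: the number of pairs
`(i,j)` with `i < j` and `σ i > σ j`. -/
def invNum {n : ℕ} (σ : Equiv.Perm (Fin n)) : ℕ :=
  (Finset.univ.filter fun p : Fin n × Fin n => p.1 < p.2 ∧ σ p.2 < σ p.1).card

/-- Insert the maximal value `n` at position `k` into a permutation of `Fin n`. -/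
def ins {n : ℕ} (e : Equiv.Perm (Fin n)) (k : Fin (n+1)) : Equiv.Perm (Fin (n+1)) :=
  (finSuccEquiv' k).trans ((e.optionCongr).trans (finSuccEquiv' (Fin.last n)).symm)

lemma ins_at {n : ℕ} (e : Equiv.Perm (Fin n)) (k : Fin (n+1)) : ins e k k = Fin.last n := by
  simp [ins, finSuccEquiv'_at]

lemma ins_succAbove {n : ℕ} (e : Equiv.Perm (Fin n)) (k : Fin (n+1)) (i : Fin n) :
    ins e k (k.succAbove i) = (e i).castSucc := by
  simp [ins, finSuccEquiv'_succAbove, Fin.succAbove_last]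

lemma invNum_eq_sum {m : ℕ} (σ : Equiv.Perm (Fin m)) :
    invNum σ = ∑ a : Fin m, ∑ b : Fin m, if a < b ∧ σ b < σ a then 1 else 0 := by
  rw [invNum, Finset.card_filter, Fintype.sum_prod_type]

lemma sum_succAbove {n : ℕ} (k : Fin (n+1)) (g : Fin (n+1) → ℕ) :
    ∑ a : Fin (n+1), g a = g k + ∑ i : Fin n, g (k.succAbove i) := by
  rw [← Equiv.sum_comp (finSuccEquiv' k).symm g, Fintype.sum_option]
  simp [finSuccEquiv'_symm_some]

lemma count_le {n : ℕ} (k : Fin (n+1)) :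
    (∑ j : Fin n, if k ≤ j.castSucc then 1 else 0) = n - k := by
  have : ∀ j : Fin n, (if k ≤ j.castSucc then 1 else 0) = if (k:ℕ) ≤ (j:ℕ) then 1 else 0 := by
    intro j; simp [Fin.le_def]
  simp_rw [this]
  rw [Fin.sum_univ_eq_sum_range (fun j => if (k:ℕ) ≤ j then 1 else 0) n,
    ← Finset.card_filter]
  have : (Finset.range n).filter (fun j => (k:ℕ) ≤ j) = Finset.Ico (k:ℕ) n := by
    ext x; simp [Finset.mem_Ico]; tauto
  rw [this, Nat.card_Ico]

lemma invNum_ins {n : ℕ} (e : Equiv.Perm (Fin n)) (k : Fin (n+1)) :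
    invNum (ins e k) = invNum e + (n - k) := by
  rw [invNum_eq_sum, invNum_eq_sum,
    sum_succAbove k (fun a => ∑ b : Fin (n+1), if a < b ∧ ins e k b < ins e k a then 1 else 0),
    sum_succAbove k (fun b => if k < b ∧ ins e k b < ins e k k then 1 else 0)]
  have h1 : ∀ j : Fin n, (if k < k.succAbove j ∧ ins e k (k.succAbove j) < ins e k k then 1 else 0)
      = if k ≤ j.castSucc then 1 else 0 := by
    intro j
    rw [ins_at, ins_succAbove]
    simp [Fin.lt_succAbove_iff_le_castSucc, Fin.castSucc_lt_last]
  have h2 : ∀ i : Fin n,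
      (∑ b : Fin (n+1), if k.succAbove i < b ∧ ins e k b < ins e k (k.succAbove i) then 1 else 0)
      = ∑ j : Fin n, if i < j ∧ e j < e i then 1 else 0 := by
    intro i
    rw [sum_succAbove k]
    simp only [ins_at, ins_succAbove, Fin.succAbove_lt_succAbove_iff,
      Fin.castSucc_lt_castSucc_iff]
    rw [if_neg (by simp [not_lt_of_gt (Fin.castSucc_lt_last (e i)), Fin.le_last]), zero_add]
  simp_rw [h1, h2]
  rw [count_le]
  simp [add_comm]

lemma ins_bijective {n : ℕ} :
    Function.Bijective (fun p : Equiv.Perm (Fin n) × Fin (n+1) => ins p.1 p.2) := by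
  rw [Fintype.bijective_iff_injective_and_card]
  refine ⟨?_, by simp [Fintype.card_perm, Nat.factorial_succ, Nat.mul_comm]⟩
  rintro ⟨e, k⟩ ⟨e', k'⟩ h
  simp only at h
  have hk : k = k' := by
    have h1 : ins e' k' k = Fin.last n := by rw [← h, ins_at]
    exact (ins e' k').injective (h1.trans (ins_at e' k').symm)
  subst hk
  have he : e = e' := by
    ext i
    have := congrArg (fun σ : Equiv.Perm (Fin (n+1)) => σ (k.succAbove i)) h
    simp only [ins_succAbove] at this
    exact congrArg Fin.val (Fin.castSucc_injective _ this)
  simp [he]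

/-- The generating function of the inversion number over the symmetric group factorizes:
`∑_{σ ∈ S_n} q^{inv σ} = ∏_{i=1}^{n} (1 + q + q² + ⋯ + q^{i−1})`. -/
theorem sum_q_pow_invNum_eq_prod {R : Type*} [CommRing R] (q : R) (n : ℕ) :
    ∑ σ : Equiv.Perm (Fin n), q ^ invNum σ =
      ∏ i ∈ Finset.range n, ∑ j ∈ Finset.range (i + 1), q ^ j := by
  induction n with
  | zero => simp [invNum]
  | succ n ih =>
    have := Fintype.sum_bijective _ (ins_bijective (n := n))
      (fun p : Equiv.Perm (Fin n) × Fin (n+1) => q ^ (invNum p.1 + (n - (p.2 : ℕ))))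
      (fun σ => q ^ invNum σ) (fun p => by rw [invNum_ins])
    rw [← this, Fintype.sum_prod_type]
    simp_rw [pow_add, ← Finset.mul_sum, ← Finset.sum_mul]
    rw [ih, Finset.prod_range_succ]
    congr 1
    rw [Fin.sum_univ_eq_sum_range (fun k => q ^ (n - k)) (n+1)]
    have := Finset.sum_range_reflect (fun j => q ^ j) (n+1)
    simp only [Nat.add_sub_cancel] at this
    rw [← this]
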